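/- Let G = (X, +, ≤) be an ordered group whose order is a semiorder and is not an antichain (some two distinct elements are comparable), and suppose G equals I(G)(0), the connected component of 0 in the incomparability graph. Then: (1) every maximal chain of (X, ≤) is order-isomorphic to the chain ℤ of integers; (2) K(G) = {0} and (X, ≤) has no infinite antichain if and only if G is isomorphic, as an ordered group, to the additive group ℤ with the order x ≤ y iff x = y or y − x ≥ a, for some integer a ≥ 1. -/

import Mathlib

set_option linter.unusedSectionVars false
set_option linter.unusedVariables false
set_option maxHeartbeats 1000000



namespace ThrPaper

universe u

variable {X : Type*}

/-- The strict order associated to a reflexive relation `le`. -/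
def Lt (le : X → X → Prop) (x y : X) : Prop := le x y ∧ ¬ le y x

/-- `x` and `y` are incomparable with respect to `le`. -/
def Incomp (le : X → X → Prop) (x y : X) : Prop := ¬ le x y ∧ ¬ le y x

/-- `le` is a partial order (reflexive, transitive, antisymmetric). -/
def IsPartialOrderRel (le : X → X → Prop) : Prop :=
  (∀ x, le x x) ∧ (∀ x y z, le x y → le y z → le x z) ∧ ∀ x y, le x y → le y x → x = y

/-- `le` is total. -/
def IsTotalRel (le : X → X → Prop) : Prop := ∀ x y, le x y ∨ le y x

/-- Compatibility of a relation with the (not necessarily abelian) group operation. -/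
def IsCompat {G : Type*} [AddGroup G] (le : G → G → Prop) : Prop :=
  ∀ a b x y : G, le x y → le (a + x + b) (a + y + b)

/-- The trace quasi-order `≤_pred`: `x ≤_pred y` iff every `z < x` satisfies `z < y`. -/
def PredLe (le : X → X → Prop) (x y : X) : Prop := ∀ z, Lt le z x → Lt le z y

/-- The trace quasi-order `≤_succ`: `x ≤_succ y` iff every `z > y` satisfies `z > x`. -/
def SuccLe (le : X → X → Prop) (x y : X) : Prop := ∀ z, Lt le y z → Lt le x z

/-- `le` is a threshold order: `≤_pred` and `≤_succ` are equal and are total orders. -/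
def IsThresholdOrder (le : X → X → Prop) : Prop :=
  (∀ x y, PredLe le x y ↔ SuccLe le x y) ∧
  (∀ x y, PredLe le x y ∨ PredLe le y x) ∧
  ∀ x y, PredLe le x y → PredLe le y x → x = y

/-- The poset `2 ⊕ 2` embeds into `le`. -/
def Embeds2p2 (le : X → X → Prop) : Prop :=
  ∃ a b c d : X, Lt le a b ∧ Lt le c d ∧
    Incomp le a c ∧ Incomp le a d ∧ Incomp le b c ∧ Incomp le b d

/-- The poset `3 ⊕ 1` embeds into `le`. -/
def Embeds3p1 (le : X → X → Prop) : Prop :=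
  ∃ a b c d : X, Lt le a b ∧ Lt le b c ∧ Incomp le d a ∧ Incomp le d b ∧ Incomp le d c

/-- The poset `1 ⊕ 2` embeds into `le`. -/
def Embeds1p2 (le : X → X → Prop) : Prop :=
  ∃ a b c : X, Lt le a b ∧ Incomp le c a ∧ Incomp le c b

section Basics
variable {G : Type*} [AddGroup G] {le : G → G → Prop}

lemma lt_trans' (hpo : IsPartialOrderRel le) {x y z : G} (h1 : Lt le x y) (h2 : Lt le y z) :
    Lt le x z := by
  refine ⟨hpo.2.1 _ _ _ h1.1 h2.1, fun h => h2.2 (hpo.2.1 _ _ _ h h1.1)⟩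

lemma le_lt_trans (hpo : IsPartialOrderRel le) {x y z : G} (h1 : le x y) (h2 : Lt le y z) :
    Lt le x z :=
  ⟨hpo.2.1 _ _ _ h1 h2.1, fun h => h2.2 (hpo.2.1 _ _ _ h h1)⟩

lemma lt_le_trans (hpo : IsPartialOrderRel le) {x y z : G} (h1 : Lt le x y) (h2 : le y z) :
    Lt le x z :=
  ⟨hpo.2.1 _ _ _ h1.1 h2, fun h => h1.2 (hpo.2.1 _ _ _ h2 h)⟩

lemma lt_ne (hpo : IsPartialOrderRel le) {x y : G} (h : Lt le x y) : x ≠ y := by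
  rintro rfl; exact h.2 h.1

lemma le_unshift (hc : IsCompat le) {a b x y : G} (h : le (a + x + b) (a + y + b)) : le x y := by
  have := hc (-a) (-b) _ _ h
  simpa [add_assoc] using this

lemma le_shift_iff (hc : IsCompat le) (a b : G) {x y : G} :
    le (a + x + b) (a + y + b) ↔ le x y := ⟨le_unshift hc, hc a b x y⟩

lemma lt_shift (hc : IsCompat le) (a b : G) {x y : G} (h : Lt le x y) :
    Lt le (a + x + b) (a + y + b) := ⟨hc a b _ _ h.1, fun hh => h.2 (le_unshift hc hh)⟩

lemma incomp_shift (hc : IsCompat le) (a b : G) {x y : G} (h : Incomp le x y) :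
    Incomp le (a + x + b) (a + y + b) :=
  ⟨fun hh => h.1 (le_unshift hc hh), fun hh => h.2 (le_unshift hc hh)⟩

/-- `Lt x y` iff `Lt 0 (-x+y)`. -/
lemma lt_iff_diff (hc : IsCompat le) {x y : G} : Lt le x y ↔ Lt le 0 (-x + y) := by
  constructor
  · intro h; have := lt_shift hc (-x) 0 h; simpa using this
  · intro h; have := lt_shift hc x 0 h; simpa [add_assoc] using this

lemma incomp_iff_diff (hc : IsCompat le) {x y : G} : Incomp le x y ↔ Incomp le 0 (-x + y) := by
  constructor
  · intro h; have := incomp_shift hc (-x) 0 h; simpa using this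
  · intro h; have := incomp_shift hc x 0 h; simpa [add_assoc] using this

lemma le_iff_diff (hc : IsCompat le) {x y : G} : le x y ↔ le 0 (-x + y) := by
  constructor
  · intro h; have := hc (-x) 0 _ _ h; simpa using this
  · intro h; have := hc x 0 _ _ h; simpa [add_assoc] using this

/-- key three-chain lemma from 3⊕1-freeness. -/
lemma chain3 (hpo : IsPartialOrderRel le) (h31 : ¬ Embeds3p1 le) {a b c : G}
    (hab : Lt le a b) (hbc : Lt le b c) (d : G) : Lt le a d ∨ Lt le d c := by
  by_contra h
  push_neg at h
  obtain ⟨had, hdc⟩ := h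
  have hac : Lt le a c := lt_trans' hpo hab hbc
  -- ¬ le d a
  have hnda : ¬ le d a := by
    intro hda
    have : Lt le d c := le_lt_trans hpo hda hac
    exact hdc this
  have hnad : ¬ le a d := fun h' => had ⟨h', hnda⟩
  -- ¬ le c d
  have hncd : ¬ le c d := fun h' => hnad (hpo.2.1 _ _ _ hac.1 h')
  have hndc : ¬ le d c := fun h' => hdc ⟨h', hncd⟩
  -- b
  have hnbd : ¬ le b d := fun h' => hnad (hpo.2.1 _ _ _ hab.1 h')
  have hndb : ¬ le d b := fun h' => hndc (hpo.2.1 _ _ _ h' hbc.1)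
  exact h31 ⟨a, b, c, d, hab, hbc, ⟨hnda, hnad⟩, ⟨hndb, hnbd⟩, ⟨hndc, hncd⟩⟩

/-- sum of two positives minus an incomparable-or-zero is positive. -/
lemma posN (hpo : IsPartialOrderRel le) (hc : IsCompat le) (h31 : ¬ Embeds3p1 le)
    {s t n : G} (hs : Lt le 0 s) (ht : Lt le 0 t) (hn : n = 0 ∨ Incomp le 0 n) :
    Lt le 0 (-n + (s + t)) := by
  have hst : Lt le s (s + t) := by
    have := lt_shift hc s 0 ht; simpa using this
  rcases hn with rfl | hn
  · simpa using lt_trans' hpo hs hst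
  · rcases chain3 hpo h31 hs hst n with h | h
    · exact absurd h.1 hn.1
    · exact (lt_iff_diff hc).1 h

/-- every element is the sum of a list of elements incomparable with 0. -/
lemma walk (hc : IsCompat le) {x : G}
    (h : Relation.ReflTransGen (fun a b => Incomp le a b) 0 x) :
    ∃ l : List G, (∀ n ∈ l, Incomp le 0 n) ∧ l.sum = x := by
  induction h with
  | refl => exact ⟨[], by simp, by simp⟩
  | tail _ h ih =>
    obtain ⟨l, hl, hsum⟩ := ih
    rename_i b c _
    refine ⟨l ++ [-b + c], ?_, ?_⟩
    · intro n hn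
      rcases List.mem_append.1 hn with h' | h'
      · exact hl n h'
      · simp at h'
        subst h'
        exact (incomp_iff_diff hc).1 h
    · simp [hsum]

lemma sum_pos (hpo : IsPartialOrderRel le) (hc : IsCompat le) :
    ∀ l : List G, (∀ s ∈ l, Lt le 0 s) → l ≠ [] → Lt le 0 l.sum := by
  intro l
  induction l with
  | nil => intro _ h; exact absurd rfl h
  | cons s l ih =>
    intro hmem _
    have hs : Lt le 0 s := hmem s (by simp)
    rcases eq_or_ne l [] with rfl | hne
    · simpa using hs
    · have hl : Lt le 0 l.sum := ih (fun x hx => hmem x (by simp [hx])) hne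
      have : Lt le s (s + l.sum) := by
        have := lt_shift hc s 0 hl; simpa using this
      simpa using lt_trans' hpo hs this

/-- counting lemma : a sum of positives equal to a sum of (zero or incomparable)s
has at most as many terms. -/
lemma count_le (hpo : IsPartialOrderRel le) (hc : IsCompat le) (h31 : ¬ Embeds3p1 le) :
    ∀ (ns ss : List G), (∀ n ∈ ns, n = 0 ∨ Incomp le 0 n) → (∀ s ∈ ss, Lt le 0 s) →
      ss.sum = ns.sum → ss.length ≤ ns.length := by
  intro ns
  induction ns with
  | nil =>
    intro ss _ hss hsum
    rcases eq_or_ne ss [] with rfl | hne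
    · simp
    · have := sum_pos hpo hc ss hss hne
      rw [hsum] at this
      exact absurd rfl (lt_ne hpo (by simpa using this))
  | cons n ns ih =>
    intro ss hns hss hsum
    match ss with
    | [] => simp
    | [s] => simp
    | s1 :: s2 :: ss =>
      have hkey : Lt le 0 (-n + (s1 + s2)) :=
        posN hpo hc h31 (hss s1 (by simp)) (hss s2 (by simp)) (hns n (by simp))
      have hsum' : ((-n + (s1 + s2)) :: ss).sum = ns.sum := by
        have : s1 + s2 + ss.sum = n + ns.sum := by
          simpa [add_assoc] using hsum
        simp only [List.sum_cons]
        rw [add_assoc, this]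
        simp
      have := ih ((-n + (s1 + s2)) :: ss)
        (fun x hx => hns x (by simp [List.mem_cons] at hx ⊢; tauto))
        ?_ hsum'
      · simpa using Nat.succ_le_succ this
      · intro x hx
        rcases List.mem_cons.1 hx with rfl | hx
        · exact hkey
        · exact hss x (by simp [hx])

end Basics

section Sorting
variable {G : Type*} {le : G → G → Prop}

lemma finset_min (hpo : IsPartialOrderRel le) :
    ∀ t : Finset G, t.Nonempty → (∀ x ∈ t, ∀ y ∈ t, le x y ∨ le y x) →
      ∃ m ∈ t, ∀ x ∈ t, le m x := by
  classical
  intro t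
  induction t using Finset.cons_induction_on with
  | empty => intro h; exact absurd rfl (Finset.nonempty_iff_ne_empty.1 h)
  | @cons a s ha ih =>
    intro _ htot
    rcases s.eq_empty_or_nonempty with rfl | hs
    · exact ⟨a, by simp, by intro x hx; simp at hx; subst hx; exact hpo.1 _⟩
    · obtain ⟨m, hm, hmin⟩ := ih hs
        (fun x hx y hy => htot x (by simp [hx]) y (by simp [hy]))
      rcases htot a (by simp) m (by simp [hm]) with h | h
      · refine ⟨a, by simp, ?_⟩
        intro x hx
        rcases Finset.mem_cons.1 hx with rfl | hx
        · exact hpo.1 _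
        · exact hpo.2.1 _ _ _ h (hmin x hx)
      · refine ⟨m, by simp [hm], ?_⟩
        intro x hx
        rcases Finset.mem_cons.1 hx with rfl | hx
        · exact h
        · exact hmin x hx

lemma finset_max (hpo : IsPartialOrderRel le) :
    ∀ t : Finset G, t.Nonempty → (∀ x ∈ t, ∀ y ∈ t, le x y ∨ le y x) →
      ∃ m ∈ t, ∀ x ∈ t, le x m := by
  classical
  intro t
  induction t using Finset.cons_induction_on with
  | empty => intro h; exact absurd rfl (Finset.nonempty_iff_ne_empty.1 h)
  | @cons a s ha ih =>
    intro _ htot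
    rcases s.eq_empty_or_nonempty with rfl | hs
    · exact ⟨a, by simp, by intro x hx; simp at hx; subst hx; exact hpo.1 _⟩
    · obtain ⟨m, hm, hmax⟩ := ih hs
        (fun x hx y hy => htot x (by simp [hx]) y (by simp [hy]))
      rcases htot a (by simp) m (by simp [hm]) with h | h
      · refine ⟨m, by simp [hm], ?_⟩
        intro x hx
        rcases Finset.mem_cons.1 hx with rfl | hx
        · exact h
        · exact hmax x hx
      · refine ⟨a, by simp, ?_⟩
        intro x hx
        rcases Finset.mem_cons.1 hx with rfl | hx
        · exact hpo.1 _
        · exact hpo.2.1 _ _ _ (hmax x hx) h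

/-- sort a totally-ordered finset into a strict chain list -/
lemma sorted_of_finset (hpo : IsPartialOrderRel le) :
    ∀ (k : ℕ) (t : Finset G), t.card = k → (∀ x ∈ t, ∀ y ∈ t, le x y ∨ le y x) →
      ∃ l : List G, (∀ x, x ∈ l ↔ x ∈ t) ∧ l.length = t.card ∧ l.Chain' (Lt le) := by
  classical
  intro k
  induction k with
  | zero =>
    intro t hcard _
    rw [Finset.card_eq_zero] at hcard
    subst hcard
    exact ⟨[], by simp, by simp, List.isChain_nil⟩
  | succ n ih =>
    intro t hcard htot
    have hne : t.Nonempty := by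
      rw [← Finset.card_pos, hcard]; omega
    obtain ⟨m, hm, hmin⟩ := finset_min hpo t hne htot
    have hcard' : (t.erase m).card = n := by
      rw [Finset.card_erase_of_mem hm, hcard]; omega
    obtain ⟨l, hmem, hlen, hchain⟩ := ih (t.erase m) hcard'
      (fun x hx y hy => htot x (Finset.mem_of_mem_erase hx) y (Finset.mem_of_mem_erase hy))
    refine ⟨m :: l, ?_, ?_, ?_⟩
    · intro x
      simp only [List.mem_cons, hmem, Finset.mem_erase]
      constructor
      · rintro (rfl | ⟨_, hx⟩)
        · exact hm
        · exact hx
      · intro hx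
        rcases eq_or_ne x m with rfl | hne'
        · exact Or.inl rfl
        · exact Or.inr ⟨hne', hx⟩
    · simp [hlen, hcard', hcard]
    · unfold List.Chain'; rw [List.isChain_cons]
      refine ⟨?_, hchain⟩
      intro y hy
      have hyl : y ∈ l := by
        cases l with
        | nil => simp at hy
        | cons a l' => simp at hy; simp [hy]
      have hyt : y ∈ t.erase m := (hmem y).1 hyl
      have hym : y ≠ m := (Finset.mem_erase.1 hyt).1
      have : le m y := hmin y (Finset.mem_of_mem_erase hyt)
      exact ⟨this, fun h => hym (hpo.2.2 _ _ h this)⟩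

end Sorting


section Interval
variable {G : Type*} [AddGroup G] {le : G → G → Prop}

/-- from a strict chain list get the list of consecutive differences. -/
lemma diffs (hc : IsCompat le) :
    ∀ (l : List G) (x : G), List.Chain (Lt le) x l →
      ∃ ss : List G, (∀ s ∈ ss, Lt le 0 s) ∧ ss.length = l.length ∧
        x + ss.sum = (x :: l).getLast (by simp) := by
  intro l
  induction l with
  | nil =>
    intro x _
    exact ⟨[], by simp, by simp, by simp⟩
  | cons z l ih =>
    intro x hchain
    unfold List.Chain at hchain; rw [List.chain_cons] at hchain
    obtain ⟨ss, hpos, hlen, hsum⟩ := ih z hchain.2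
    refine ⟨(-x + z) :: ss, ?_, by simp [hlen], ?_⟩
    · intro s hs
      rcases List.mem_cons.1 hs with rfl | hs
      · exact (lt_iff_diff hc).1 hchain.1
      · exact hpos s hs
    · have h1 : (x :: z :: l).getLast (by simp) = (z :: l).getLast (by simp) := by
        simp [List.getLast_cons]
      rw [h1, ← hsum]
      simp [List.sum_cons, ← add_assoc]

/-- intervals of chains are finite. -/
lemma interval_finite (hpo : IsPartialOrderRel le) (hc : IsCompat le)
    (h31 : ¬ Embeds3p1 le)
    (hconn : ∀ x : G, Relation.ReflTransGen (fun a b => Incomp le a b) 0 x)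
    {C : Set G} (hCtot : ∀ x ∈ C, ∀ y ∈ C, le x y ∨ le y x)
    {c d : G} (hcC : c ∈ C) (hdC : d ∈ C) :
    {x | x ∈ C ∧ le c x ∧ le x d}.Finite := by
  classical
  by_contra hinf
  have hinf : {x | x ∈ C ∧ le c x ∧ le x d}.Infinite := hinf
  obtain ⟨ns, hns, hnsum⟩ := walk hc (hconn (-c + d))
  obtain ⟨t, htsub, htcard⟩ := hinf.exists_subset_card_eq (ns.length + 2)
  have httot : ∀ x ∈ t, ∀ y ∈ t, le x y ∨ le y x := by
    intro x hx y hy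
    exact hCtot x (htsub hx).1 y (htsub hy).1
  obtain ⟨l, hlmem, hlen, hchain⟩ := sorted_of_finset hpo t.card t rfl httot
  rw [htcard] at hlen
  match l, hlen with
  | x :: l', hlen =>
    have hchain' : List.Chain (Lt le) x l' := hchain
    set y := (x :: l').getLast (by simp) with hy
    have hxt : x ∈ t := (hlmem x).1 (by simp)
    have hyt : y ∈ t := (hlmem y).1 (List.getLast_mem _)
    obtain ⟨ss, hpos, hsslen, hsum⟩ := diffs hc l' x hchain'
    -- extend on the left
    have hcx : le c x := (htsub hxt).2.1
    have hyd : le y d := (htsub hyt).2.2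
    obtain ⟨ss1, hpos1, hsum1⟩ :
        ∃ ss1 : List G, (∀ s ∈ ss1, Lt le 0 s) ∧ c + ss1.sum = x := by
      rcases eq_or_ne c x with rfl | hne
      · exact ⟨[], by simp, by simp⟩
      · refine ⟨[-c + x], ?_, by simp⟩
        intro s hs; simp at hs; subst hs
        exact (lt_iff_diff hc).1 ⟨hcx, fun h => hne (hpo.2.2 _ _ hcx h)⟩
    obtain ⟨ss3, hpos3, hsum3⟩ :
        ∃ ss3 : List G, (∀ s ∈ ss3, Lt le 0 s) ∧ y + ss3.sum = d := by
      rcases eq_or_ne y d with rfl | hne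
      · exact ⟨[], by simp, by simp⟩
      · refine ⟨[-y + d], ?_, by simp⟩
        intro s hs; simp at hs; subst hs
        exact (lt_iff_diff hc).1 ⟨hyd, fun h => hne (hpo.2.2 _ _ hyd h)⟩
    have hbig : (ss1 ++ ss ++ ss3).sum = ns.sum := by
      rw [hnsum]
      have : c + (ss1 ++ ss ++ ss3).sum = d := by
        simp only [List.sum_append]
        rw [← add_assoc, ← add_assoc, hsum1, hsum, ← hy, hsum3]
      rw [← this]
      simp
    have hposall : ∀ s ∈ ss1 ++ ss ++ ss3, Lt le 0 s := by
      intro s hs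
      rcases List.mem_append.1 hs with hs | hs
      · rcases List.mem_append.1 hs with hs | hs
        · exact hpos1 s hs
        · exact hpos s hs
      · exact hpos3 s hs
    have hcount := count_le hpo hc h31 ns (ss1 ++ ss ++ ss3)
      (fun n hn => Or.inr (hns n hn)) hposall hbig
    have : ns.length + 1 ≤ (ss1 ++ ss ++ ss3).length := by
      simp only [List.length_append]
      have : ss.length = ns.length + 1 := by
        rw [hsslen]
        have := hlen
        simp at this
        omega
      omega
    omega

end Interval


section Part1
variable {G : Type*} [AddGroup G] {le : G → G → Prop}

theorem part1 (hpo : IsPartialOrderRel le) (hc : IsCompat le) (h31 : ¬ Embeds3p1 le)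
    (hnotantichain : ∃ x y : G, Lt le x y)
    (hconn : ∀ x : G, Relation.ReflTransGen (fun a b => Incomp le a b) 0 x)
    (C : Set G) (hCtot : ∀ x ∈ C, ∀ y ∈ C, le x y ∨ le y x)
    (hmax : ∀ D : Set G, C ⊆ D → (∀ x ∈ D, ∀ y ∈ D, le x y ∨ le y x) → D = C) :
    ∃ f : ℤ → G, (∀ m n : ℤ, m ≤ n ↔ le (f m) (f n)) ∧ Set.range f = C := by
  classical
  obtain ⟨x₀, y₀, hxy⟩ := hnotantichain
  have hp : Lt le 0 (-x₀ + y₀) := (lt_iff_diff hc).1 hxy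
  set p := -x₀ + y₀ with hpdef
  -- C is nonempty
  have hCne : C.Nonempty := by
    rcases C.eq_empty_or_nonempty with rfl | h
    · have := hmax {x₀} (by simp) ?_
      · exact absurd this (by simp)
      · intro x hx y hy
        simp at hx hy
        subst hx; subst hy
        exact Or.inl (hpo.1 _)
    · exact h
  obtain ⟨c0, hc0C⟩ := hCne
  -- every element of C has something strictly above it in C
  have habove : ∀ c ∈ C, ∃ u ∈ C, Lt le c u := by
    intro c hcC
    by_contra h
    push_neg at h
    have hall : ∀ y ∈ C, le y c := by
      intro y hy
      rcases hCtot y hy c hcC with h' | h'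
      · exact h'
      · rcases eq_or_ne c y with rfl | hne
        · exact hpo.1 _
        · have hlt : Lt le c y := ⟨h', fun hh => hne (hpo.2.2 _ _ h' hh)⟩
          exact absurd hlt (h y hy)
    have hccp : Lt le c (c + p) := by
      have := lt_shift hc c 0 hp; simpa using this
    have hDtot : ∀ x ∈ insert (c+p) C, ∀ y ∈ insert (c+p) C, le x y ∨ le y x := by
      intro x hx y hy
      rcases Set.mem_insert_iff.1 hx with rfl | hx
      · rcases Set.mem_insert_iff.1 hy with rfl | hy
        · exact Or.inl (hpo.1 _)
        · exact Or.inr (hpo.2.1 _ _ _ (hall y hy) hccp.1)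
      · rcases Set.mem_insert_iff.1 hy with rfl | hy
        · exact Or.inl (hpo.2.1 _ _ _ (hall x hx) hccp.1)
        · exact hCtot x hx y hy
    have hD := hmax _ (Set.subset_insert _ _) hDtot
    have : c + p ∈ C := by rw [← hD]; exact Set.mem_insert _ _
    exact (h _ this) hccp
  have hbelow : ∀ c ∈ C, ∃ u ∈ C, Lt le u c := by
    intro c hcC
    by_contra h
    push_neg at h
    have hall : ∀ y ∈ C, le c y := by
      intro y hy
      rcases hCtot y hy c hcC with h' | h'
      · rcases eq_or_ne y c with rfl | hne
        · exact hpo.1 _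
        · have hlt : Lt le y c := ⟨h', fun hh => hne (hpo.2.2 _ _ h' hh)⟩
          exact absurd hlt (h y hy)
      · exact h'
    have hnp : Lt le (-p) 0 := by
      have := lt_shift hc (-p) 0 hp; simpa using this
    have hccp : Lt le (c + -p) c := by
      have := lt_shift hc c 0 hnp
      simpa using this
    have hDtot : ∀ x ∈ insert (c + -p) C, ∀ y ∈ insert (c + -p) C, le x y ∨ le y x := by
      intro x hx y hy
      rcases Set.mem_insert_iff.1 hx with rfl | hx
      · rcases Set.mem_insert_iff.1 hy with rfl | hy
        · exact Or.inl (hpo.1 _)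
        · exact Or.inl (hpo.2.1 _ _ _ hccp.1 (hall y hy))
      · rcases Set.mem_insert_iff.1 hy with rfl | hy
        · exact Or.inr (hpo.2.1 _ _ _ hccp.1 (hall x hx))
        · exact hCtot x hx y hy
    have hD := hmax _ (Set.subset_insert _ _) hDtot
    have : c + -p ∈ C := by rw [← hD]; exact Set.mem_insert _ _
    exact (h _ this) hccp
  -- successor
  have hsucc : ∀ c, c ∈ C → ∃ s, (s ∈ C ∧ Lt le c s) ∧ ∀ x ∈ C, Lt le c x → le s x := by
    intro c hcC
    obtain ⟨u, huC, hcu⟩ := habove c hcC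
    have hJfin : {x | x ∈ C ∧ le c x ∧ le x u}.Finite :=
      interval_finite hpo hc h31 hconn hCtot hcC huC
    have hJ'fin : {x | (x ∈ C ∧ le c x ∧ le x u) ∧ x ≠ c}.Finite :=
      hJfin.subset (fun x hx => hx.1)
    have hJ'ne : ((hJ'fin.toFinset) : Finset G).Nonempty := by
      rw [Set.Finite.toFinset_nonempty]
      exact ⟨u, ⟨huC, hcu.1, hpo.1 _⟩, (lt_ne hpo hcu).symm⟩
    obtain ⟨m, hm, hmin⟩ := finset_min hpo hJ'fin.toFinset hJ'ne (by
      intro x hx y hy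
      rw [Set.Finite.mem_toFinset] at hx hy
      exact hCtot x hx.1.1 y hy.1.1)
    rw [Set.Finite.mem_toFinset] at hm
    obtain ⟨⟨hmC, hcm, hmu⟩, hmne⟩ := hm
    refine ⟨m, ⟨hmC, hcm, fun hh => hmne (hpo.2.2 _ _ hh hcm)⟩, ?_⟩
    intro x hxC hcx
    rcases hCtot x hxC u huC with h' | h'
    · have : x ∈ hJ'fin.toFinset := by
        rw [Set.Finite.mem_toFinset]
        exact ⟨⟨hxC, hcx.1, h'⟩, (lt_ne hpo hcx).symm⟩
      exact hmin x this
    · have hmu' : le m u := hmu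
      exact hpo.2.1 _ _ _ hmu' h'
  -- predecessor
  have hpred : ∀ c, c ∈ C → ∃ s, (s ∈ C ∧ Lt le s c) ∧ ∀ x ∈ C, Lt le x c → le x s := by
    intro c hcC
    obtain ⟨u, huC, hcu⟩ := hbelow c hcC
    have hJfin : {x | x ∈ C ∧ le u x ∧ le x c}.Finite :=
      interval_finite hpo hc h31 hconn hCtot huC hcC
    have hJ'fin : {x | (x ∈ C ∧ le u x ∧ le x c) ∧ x ≠ c}.Finite :=
      hJfin.subset (fun x hx => hx.1)
    have hJ'ne : ((hJ'fin.toFinset) : Finset G).Nonempty := by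
      rw [Set.Finite.toFinset_nonempty]
      exact ⟨u, ⟨huC, hpo.1 _, hcu.1⟩, lt_ne hpo hcu⟩
    obtain ⟨m, hm, hmax'⟩ := finset_max hpo hJ'fin.toFinset hJ'ne (by
      intro x hx y hy
      rw [Set.Finite.mem_toFinset] at hx hy
      exact hCtot x hx.1.1 y hy.1.1)
    rw [Set.Finite.mem_toFinset] at hm
    obtain ⟨⟨hmC, hum, hmc⟩, hmne⟩ := hm
    refine ⟨m, ⟨hmC, hmc, fun hh => hmne (hpo.2.2 _ _ hmc hh)⟩, ?_⟩
    intro x hxC hxc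
    rcases hCtot x hxC u huC with h' | h'
    · exact hpo.2.1 _ _ _ h' hum
    · have : x ∈ hJ'fin.toFinset := by
        rw [Set.Finite.mem_toFinset]
        exact ⟨⟨hxC, h', hxc.1⟩, lt_ne hpo hxc⟩
      exact hmax' x this
  choose! sf hsf1 hsf2 using hsucc
  choose! pf hpf1 hpf2 using hpred
  set g : ℕ → G := fun n => sf^[n] c0 with hgdef
  set h : ℕ → G := fun n => pf^[n] c0 with hhdef
  have hg0 : g 0 = c0 := rfl
  have hh0 : h 0 = c0 := rfl
  have hgsucc : ∀ n, g (n+1) = sf (g n) := by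
    intro n; simp [hgdef, Function.iterate_succ_apply']
  have hhsucc : ∀ n, h (n+1) = pf (h n) := by
    intro n; simp [hhdef, Function.iterate_succ_apply']
  have hgC : ∀ n, g n ∈ C := by
    intro n
    induction n with
    | zero => exact hc0C
    | succ n ih => rw [hgsucc]; exact (hsf1 _ ih).1
  have hhC : ∀ n, h n ∈ C := by
    intro n
    induction n with
    | zero => exact hc0C
    | succ n ih => rw [hhsucc]; exact (hpf1 _ ih).1
  have hgs : ∀ n, Lt le (g n) (g (n+1)) := by
    intro n; rw [hgsucc]; exact (hsf1 _ (hgC n)).2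
  have hhs : ∀ n, Lt le (h (n+1)) (h n) := by
    intro n; rw [hhsucc]; exact (hpf1 _ (hhC n)).2
  set f : ℤ → G := fun m => if 0 ≤ m then g m.toNat else h (-m).toNat with hfdef
  have hf0 : f 0 = c0 := by simp [hfdef, hg0]
  have hfnat : ∀ n : ℕ, f (n : ℤ) = g n := by
    intro n; simp [hfdef]
  have hfneg : ∀ n : ℕ, f (-(n : ℤ)) = h n := by
    intro n
    rcases Nat.eq_zero_or_pos n with rfl | hn
    · simpa [hh0] using hf0
    · have : ¬ (0 : ℤ) ≤ -(n:ℤ) := by omega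
      simp [hfdef, this, hn.ne']
  have hstep : ∀ m : ℤ, Lt le (f m) (f (m + 1)) := by
    intro m
    rcases le_or_gt 0 m with hm | hm
    · have h0 : (0:ℤ) ≤ m + 1 := by omega
      have ht : (m+1).toNat = m.toNat + 1 := by omega
      have h1 : f m = g m.toNat := by simp only [hfdef, if_pos hm]
      have h2 : f (m+1) = g (m.toNat + 1) := by
        simp only [hfdef, if_pos h0, ht]
      rw [h1, h2]; exact hgs _
    · have hm' : ¬ (0:ℤ) ≤ m := by omega
      have h1 : f m = h (-m).toNat := by simp only [hfdef, if_neg hm']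
      have hk : (-m).toNat = ((-m).toNat - 1) + 1 := by omega
      have h2 : f (m+1) = h ((-m).toNat - 1) := by
        rcases eq_or_lt_of_le (show m + 1 ≤ 0 by omega) with heq | hlt
        · have hm1 : m = -1 := by omega
          subst hm1
          have : (-(-1:ℤ)).toNat - 1 = 0 := by omega
          rw [this, hh0]
          simpa using hf0
        · have hneg : ¬ (0:ℤ) ≤ m + 1 := by omega
          have h3 : (-(m+1)).toNat = (-m).toNat - 1 := by omega
          simp only [hfdef, if_neg hneg, h3]
      rw [h1, h2, hk]
      exact hhs _
  have hmono : ∀ m n : ℤ, m < n → Lt le (f m) (f n) := by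
    intro m n hmn
    have : ∀ k, m + 1 ≤ k → Lt le (f m) (f k) :=
      Int.le_induction (hstep m) (fun n _ ih => lt_trans' hpo ih (hstep n))
    exact this n (by omega)
  have hfC : ∀ m, f m ∈ C := by
    intro m
    rcases le_or_gt 0 m with hm | hm
    · simp only [hfdef, if_pos hm]; exact hgC _
    · simp only [hfdef, if_neg (by omega : ¬ (0:ℤ) ≤ m)]; exact hhC _
  refine ⟨f, ?_, ?_⟩
  · intro m n
    constructor
    · intro hmn
      rcases eq_or_lt_of_le hmn with rfl | hlt
      · exact hpo.1 _
      · exact (hmono m n hlt).1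
    · intro hle
      by_contra hcon
      exact (hmono n m (by omega)).2 hle
  · apply Set.eq_of_subset_of_subset
    · rintro x ⟨m, rfl⟩
      exact hfC m
    · -- surjectivity
      have hgsurj : ∀ k : ℕ, ∀ x, x ∈ C → le c0 x →
          {z | z ∈ C ∧ le c0 z ∧ le z x}.ncard = k → ∃ n : ℕ, g n = x := by
        intro k
        induction k using Nat.strong_induction_on with
        | _ k ih =>
          intro x hxC hle hcard
          rcases eq_or_ne x c0 with rfl | hne
          · exact ⟨0, rfl⟩
          · have hlt : Lt le c0 x := ⟨hle, fun hh => hne (hpo.2.2 _ _ hh hle)⟩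
            have hq := hpf1 x hxC
            have hq3 := hpf2 x hxC
            set q := pf x with hqdef
            have hqC : q ∈ C := hq.1
            have hqx : Lt le q x := hq.2
            have hc0q : le c0 q := hq3 c0 hc0C hlt
            have hsub : {z | z ∈ C ∧ le c0 z ∧ le z q} ⊂ {z | z ∈ C ∧ le c0 z ∧ le z x} := by
              constructor
              · rintro z ⟨hzC, hz1, hz2⟩
                exact ⟨hzC, hz1, hpo.2.1 _ _ _ hz2 hqx.1⟩
              · intro hss
                have hx1 : x ∈ {z | z ∈ C ∧ le c0 z ∧ le z x} := ⟨hxC, hle, hpo.1 _⟩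
                have := hss hx1
                obtain ⟨-, -, hxq⟩ := this
                have : q = x := hpo.2.2 _ _ hqx.1 hxq
                exact (lt_ne hpo hqx) this
            have hfinx : {z | z ∈ C ∧ le c0 z ∧ le z x}.Finite :=
              interval_finite hpo hc h31 hconn hCtot hc0C hxC
            have hcard' : {z | z ∈ C ∧ le c0 z ∧ le z q}.ncard < k := by
              rw [← hcard]
              exact Set.ncard_lt_ncard hsub hfinx
            obtain ⟨n, hn⟩ := ih _ hcard' q hqC hc0q rfl
            refine ⟨n + 1, ?_⟩
            rw [hgsucc, hn]
            -- sf q = x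
            have hsq := hsf1 q hqC
            have hsq3 := hsf2 q hqC
            have h1 : le (sf q) x := hsq3 x hxC hqx
            rcases eq_or_ne (sf q) x with heq | hne'
            · exact heq
            · have : Lt le (sf q) x := ⟨h1, fun hh => hne' (hpo.2.2 _ _ h1 hh)⟩
              have h2 : le (sf q) q := hq3 (sf q) hsq.1 this
              have : q = sf q := hpo.2.2 _ _ hsq.2.1 h2
              exact absurd this (lt_ne hpo hsq.2)
      have hhsurj : ∀ k : ℕ, ∀ x, x ∈ C → le x c0 →
          {z | z ∈ C ∧ le x z ∧ le z c0}.ncard = k → ∃ n : ℕ, h n = x := by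
        intro k
        induction k using Nat.strong_induction_on with
        | _ k ih =>
          intro x hxC hle hcard
          rcases eq_or_ne x c0 with rfl | hne
          · exact ⟨0, rfl⟩
          · have hlt : Lt le x c0 := ⟨hle, fun hh => hne (hpo.2.2 _ _ hle hh)⟩
            have hq := hsf1 x hxC
            have hq3 := hsf2 x hxC
            set q := sf x with hqdef
            have hqC : q ∈ C := hq.1
            have hxq : Lt le x q := hq.2
            have hqc0 : le q c0 := hq3 c0 hc0C hlt
            have hsub : {z | z ∈ C ∧ le q z ∧ le z c0} ⊂ {z | z ∈ C ∧ le x z ∧ le z c0} := by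
              constructor
              · rintro z ⟨hzC, hz1, hz2⟩
                exact ⟨hzC, hpo.2.1 _ _ _ hxq.1 hz1, hz2⟩
              · intro hss
                have hx1 : x ∈ {z | z ∈ C ∧ le x z ∧ le z c0} := ⟨hxC, hpo.1 _, hle⟩
                have := hss hx1
                obtain ⟨-, hqx, -⟩ := this
                have : x = q := hpo.2.2 _ _ hxq.1 hqx
                exact (lt_ne hpo hxq) this
            have hfinx : {z | z ∈ C ∧ le x z ∧ le z c0}.Finite :=
              interval_finite hpo hc h31 hconn hCtot hxC hc0C
            have hcard' : {z | z ∈ C ∧ le q z ∧ le z c0}.ncard < k := by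
              rw [← hcard]
              exact Set.ncard_lt_ncard hsub hfinx
            obtain ⟨n, hn⟩ := ih _ hcard' q hqC hqc0 rfl
            refine ⟨n + 1, ?_⟩
            rw [hhsucc, hn]
            -- pf q = x
            have hsq := hpf1 q hqC
            have hsq3 := hpf2 q hqC
            have h1 : le x (pf q) := hsq3 x hxC hxq
            rcases eq_or_ne (pf q) x with heq | hne'
            · exact heq
            · have : Lt le x (pf q) := ⟨h1, fun hh => hne' (hpo.2.2 _ _ hh h1)⟩
              have h2 : le q (pf q) := hq3 (pf q) hsq.1 this
              have : pf q = q := hpo.2.2 _ _ hsq.2.1 h2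
              exact absurd this (lt_ne hpo hsq.2)
      intro x hxC
      rcases hCtot c0 hc0C x hxC with h' | h'
      · obtain ⟨n, hn⟩ := hgsurj _ x hxC h' rfl
        exact ⟨(n : ℤ), by rw [hfnat]; exact hn⟩
      · obtain ⟨n, hn⟩ := hhsurj _ x hxC h' rfl
        exact ⟨(-(n : ℤ)), by rw [hfneg]; exact hn⟩

end Part1


section Part2Lemmas
variable {G : Type*} [AddGroup G] {le : G → G → Prop}

lemma pl_refl (x : G) : PredLe le x x := fun _ h => h

lemma pl_trans {x y z : G} (h1 : PredLe le x y) (h2 : PredLe le y z) : PredLe le x z :=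
  fun w hw => h2 w (h1 w hw)

lemma pl_shift (hc : IsCompat le) (a b : G) {x y : G} (h : PredLe le x y) :
    PredLe le (a + x + b) (a + y + b) := by
  intro z hz
  have h1 := lt_shift hc (-a) (-b) hz
  have h2 : Lt le (-a + z + -b) x := by
    have e : -a + (a + x + b) + -b = x := by simp [add_assoc]
    rwa [e] at h1
  have h3 := h _ h2
  have h4 := lt_shift hc a b h3
  have e : a + (-a + z + -b) + b = z := by simp [add_assoc]
  rwa [e] at h4

lemma pl_diff (hc : IsCompat le) {x y : G} : PredLe le x y ↔ PredLe le 0 (-x + y) := by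
  constructor
  · intro h
    have := pl_shift hc (-x) 0 h
    simpa using this
  · intro h
    have := pl_shift hc x 0 h
    simpa [add_assoc] using this

lemma pl_total (hpo : IsPartialOrderRel le) (h22 : ¬ Embeds2p2 le) :
    ∀ x y : G, PredLe le x y ∨ PredLe le y x := by
  intro x y
  by_contra h
  push_neg at h
  obtain ⟨hxy, hyx⟩ := h
  simp only [PredLe, not_forall] at hxy hyx
  obtain ⟨a, ha1, ha2⟩ := hxy
  obtain ⟨c, hc1, hc2⟩ := hyx
  have hya : ¬ le y a := fun h' => hc2 (lt_trans' hpo (lt_le_trans hpo hc1 h') ha1)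
  have hay : ¬ le a y := fun h' => ha2 ⟨h', hya⟩
  have hxc : ¬ le x c := fun h' => ha2 (lt_trans' hpo (lt_le_trans hpo ha1 h') hc1)
  have hcx : ¬ le c x := fun h' => hc2 ⟨h', hxc⟩
  have hac : ¬ le a c := fun h' => ha2 (le_lt_trans hpo h' hc1)
  have hca : ¬ le c a := fun h' => hc2 (le_lt_trans hpo h' ha1)
  have hxy' : ¬ le x y := fun h' => ha2 (lt_le_trans hpo ha1 h')
  have hyx' : ¬ le y x := fun h' => hc2 (lt_le_trans hpo hc1 h')
  exact h22 ⟨a, x, c, y, ha1, hc1, ⟨hac, hca⟩, ⟨hay, hya⟩, ⟨hxc, hcx⟩, ⟨hxy', hyx'⟩⟩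

lemma pl_antisym (hc : IsCompat le)
    (hK : {x : G | PredLe le x 0 ∧ PredLe le 0 x} = {0}) {x y : G}
    (h1 : PredLe le x y) (h2 : PredLe le y x) : x = y := by
  have h1' : PredLe le 0 (-x + y) := (pl_diff hc).1 h1
  have h2' : PredLe le (-x + y) 0 := by
    have := pl_shift hc (-x) 0 h2
    simpa using this
  have : -x + y ∈ {x : G | PredLe le x 0 ∧ PredLe le 0 x} := ⟨h2', h1'⟩
  rw [hK] at this
  exact (neg_add_eq_zero.1 this)

lemma le_pl (hpo : IsPartialOrderRel le) {x y : G} (h : le x y) : PredLe le x y :=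
  fun _ hz => lt_le_trans hpo hz h

lemma pl_pos_up {s t : G} (hs : Lt le 0 s) (h : PredLe le s t) : Lt le 0 t := h 0 hs

lemma trichotomy (hpo : IsPartialOrderRel le) (g : G) :
    Lt le 0 g ∨ Lt le g 0 ∨ (g = 0 ∨ Incomp le 0 g) := by
  by_cases h1 : le 0 g <;> by_cases h2 : le g 0
  · exact Or.inr (Or.inr (Or.inl (hpo.2.2 _ _ h2 h1)))
  · exact Or.inl ⟨h1, h2⟩
  · exact Or.inr (Or.inl ⟨h2, h1⟩)
  · exact Or.inr (Or.inr (Or.inr ⟨h1, h2⟩))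

end Part2Lemmas


section Part2Main
variable {G : Type*} [AddGroup G] {le : G → G → Prop}

theorem part2_fwd (hpo : IsPartialOrderRel le) (hc : IsCompat le)
    (h22 : ¬ Embeds2p2 le)
    (hnotantichain : ∃ x y : G, Lt le x y)
    (hconn : ∀ x : G, Relation.ReflTransGen (fun a b => Incomp le a b) 0 x)
    (hK : {x : G | PredLe le x 0 ∧ PredLe le 0 x} = {0})
    (hA : ¬ ∃ A : Set G, A.Infinite ∧ ∀ x ∈ A, ∀ y ∈ A, x ≠ y → Incomp le x y) :
    ∃ a : ℤ, 1 ≤ a ∧ ∃ e : G ≃+ ℤ, ∀ x y : G, le x y ↔ (x = y ∨ a ≤ e y - e x) := by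
  classical
  have antisym : ∀ {x y : G}, PredLe le x y → PredLe le y x → x = y :=
    fun h1 h2 => pl_antisym hc hK h1 h2
  have total : ∀ x y : G, PredLe le x y ∨ PredLe le y x := pl_total hpo h22
  have hpo' : IsPartialOrderRel (PredLe le) :=
    ⟨pl_refl, fun _ _ _ h1 h2 => pl_trans h1 h2, fun _ _ h1 h2 => antisym h1 h2⟩
  -- no strictly negative element is PredLe-above 0
  have haux : ∀ x : G, Lt le x 0 → ¬ PredLe le 0 x := by
    intro x hx h
    exact (lt_ne hpo (h x hx)) rfl
  set Bs : Set G := {x : G | x = 0 ∨ Incomp le 0 x} with hBsdef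
  have hBneg : ∀ x ∈ Bs, -x ∈ Bs := by
    rintro x (rfl | hx)
    · left; simp
    · right
      have := incomp_shift hc (-x) 0 hx
      simp only [add_zero, neg_add_cancel] at this
      exact ⟨this.2, this.1⟩
  have hconvex : ∀ x b : G, b ∈ Bs → PredLe le 0 x → PredLe le x b → x ∈ Bs := by
    intro x b hb h0x hxb
    rcases trichotomy hpo x with h | h | h
    · have hb' : Lt le 0 b := pl_pos_up h hxb
      rcases hb with rfl | hb
      · exact absurd rfl (lt_ne hpo hb')
      · exact absurd hb'.1 hb.1
    · exact absurd h0x (haux x h)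
    · exact h
  -- B ∩ {PredLe 0 ·} is finite
  have hBposfin : {x : G | x ∈ Bs ∧ PredLe le 0 x}.Finite := by
    by_contra hinf
    have hinf : {x : G | x ∈ Bs ∧ PredLe le 0 x}.Infinite := hinf
    refine hA ⟨_, hinf, ?_⟩
    have helper : ∀ x ∈ {x : G | x ∈ Bs ∧ PredLe le 0 x},
        ∀ y ∈ {x : G | x ∈ Bs ∧ PredLe le 0 x}, x ≠ y → PredLe le x y → Incomp le x y := by
      intro x hx y hy hne hxy
      have h0d : PredLe le 0 (-x + y) := (pl_diff hc).1 hxy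
      have hdy : PredLe le (-x + y) y := by
        have h1 : PredLe le (-x) 0 := by
          have := pl_shift hc (-x) 0 hx.2
          simpa using this
        have := pl_shift hc 0 y h1
        simpa using this
      have hmem := hconvex (-x + y) y hy.1 h0d hdy
      rcases hmem with h' | h'
      · exact absurd (neg_add_eq_zero.1 h') hne
      · have := incomp_shift hc x 0 h'
        simp only [add_zero, add_neg_cancel_left, add_zero] at this
        convert this using 2 <;> simp [add_assoc]
    intro x hx y hy hne
    rcases total x y with h | h
    · exact helper x hx y hy hne h
    · have := helper y hy x hx hne.symm h
      exact ⟨this.2, this.1⟩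
  have hBnegfin : {x : G | x ∈ Bs ∧ PredLe le x 0}.Finite := by
    have himage : {x : G | x ∈ Bs ∧ PredLe le x 0} ⊆
        (fun x => -x) '' {x : G | x ∈ Bs ∧ PredLe le 0 x} := by
      intro x ⟨hx1, hx2⟩
      refine ⟨-x, ⟨hBneg x hx1, ?_⟩, by simp⟩
      have := pl_shift hc (-x) 0 hx2
      simpa using this
    exact (hBposfin.image _).subset himage
  have hBfin : Bs.Finite := by
    have : Bs ⊆ {x : G | x ∈ Bs ∧ PredLe le 0 x} ∪ {x : G | x ∈ Bs ∧ PredLe le x 0} := by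
      intro x hx
      rcases total 0 x with h | h
      · exact Or.inl ⟨hx, h⟩
      · exact Or.inr ⟨hx, h⟩
    exact (hBposfin.union hBnegfin).subset this
  -- there is a nonzero element of Bs
  have hNne : ∃ n : G, Incomp le 0 n := by
    by_contra hno
    push_neg at hno
    have hzero : ∀ x : G, x = 0 := by
      intro x
      induction hconn x with
      | refl => rfl
      | tail _ hstep ih =>
        rename_i b c _
        rw [ih] at hstep
        exact absurd hstep (by
          intro hh
          exact (hno c) hh)
    obtain ⟨x, y, hxy⟩ := hnotantichain
    rw [hzero x, hzero y] at hxy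
    exact (lt_ne hpo hxy) rfl
  -- Bp : strictly positive elements of Bs
  set Bp : Set G := {x : G | x ∈ Bs ∧ PredLe le 0 x ∧ x ≠ 0} with hBpdef
  have hBpne : Bp.Nonempty := by
    obtain ⟨n, hn⟩ := hNne
    have hn0 : n ≠ 0 := by
      rintro rfl
      exact hn.1 (hpo.1 0)
    rcases total 0 n with h | h
    · exact ⟨n, Or.inr hn, h, hn0⟩
    · refine ⟨-n, hBneg n (Or.inr hn), ?_, by simpa using hn0⟩
      have := pl_shift hc (-n) 0 h
      simpa using this
  have hBpfin : Bp.Finite := hBfin.subset (fun x hx => hx.1)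
  have hBpne' : hBpfin.toFinset.Nonempty := by
    rw [Set.Finite.toFinset_nonempty]; exact hBpne
  obtain ⟨b₁, hb₁mem, hb₁min⟩ := finset_min hpo' hBpfin.toFinset hBpne'
    (fun x _ y _ => total x y)
  rw [Set.Finite.mem_toFinset] at hb₁mem
  obtain ⟨hb₁B, hb₁pos, hb₁ne⟩ := hb₁mem
  -- b₁ is the least strictly positive element of G
  have hminpos : ∀ g : G, PredLe le 0 g → g ≠ 0 → PredLe le b₁ g := by
    intro g hg hgne
    rcases trichotomy hpo g with h | h | h
    · rcases total b₁ g with h' | h'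
      · exact h'
      · have : Lt le 0 b₁ := pl_pos_up h h'
        rcases hb₁B with rfl | hb
        · exact absurd rfl (lt_ne hpo this)
        · exact absurd this.1 hb.1
    · exact absurd hg (haux g h)
    · have : g ∈ hBpfin.toFinset := by
        rw [Set.Finite.mem_toFinset]; exact ⟨h, hg, hgne⟩
      exact hb₁min g this
  -- strict positivity is additive
  have hSPadd : ∀ x y : G, (PredLe le 0 x ∧ x ≠ 0) → (PredLe le 0 y ∧ y ≠ 0) →
      PredLe le 0 (x + y) ∧ x + y ≠ 0 := by
    intro x y hx hy
    constructor
    · refine pl_trans hx.1 ?_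
      have := pl_shift hc x 0 hy.1
      simpa using this
    · intro h
      have hyx : y = -x := eq_neg_of_add_eq_zero_right h
      have h1 : PredLe le (-x) 0 := by
        have := pl_shift hc (-x) 0 hx.1
        simpa using this
      have h2 : PredLe le 0 (-x) := hyx ▸ hy.1
      exact hx.2 (by simpa using (pl_antisym hc hK h2 h1).symm)
  -- integer multiples of b₁
  have hzsm : ∀ k : ℤ, 1 ≤ k → PredLe le 0 (k • b₁) ∧ k • b₁ ≠ 0 := by
    intro k hk
    refine Int.le_induction (motive := fun k _ => PredLe le 0 (k • b₁) ∧ k • b₁ ≠ 0) ?_ ?_ k hk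
    · simp only [one_zsmul]; exact ⟨hb₁pos, hb₁ne⟩
    · intro n hn ih
      have e : (n + 1) • b₁ = n • b₁ + b₁ := by rw [add_zsmul, one_zsmul]
      show PredLe le 0 ((n + 1) • b₁) ∧ (n + 1) • b₁ ≠ 0
      rw [e]
      exact hSPadd _ _ ih ⟨hb₁pos, hb₁ne⟩
  have hzsm0 : ∀ k : ℤ, 0 ≤ k → PredLe le 0 (k • b₁) := by
    intro k hk
    rcases eq_or_lt_of_le hk with rfl | h
    · rw [zero_zsmul]; exact pl_refl 0
    · exact (hzsm k (by omega)).1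
  have hdiffpos : ∀ k l : ℤ, k < l →
      PredLe le 0 (-(k • b₁) + l • b₁) ∧ (-(k • b₁) + l • b₁) ≠ 0 := by
    intro k l h
    have e2 : -k + l = l - k := by omega
    have e : -(k • b₁) + l • b₁ = (l - k) • b₁ := by
      rw [← neg_zsmul, ← add_zsmul, e2]
    rw [e]
    exact hzsm _ (by omega)
  have hinj : ∀ k l : ℤ, k • b₁ = l • b₁ → k = l := by
    intro k l h
    by_contra hne
    rcases lt_or_gt_of_ne hne with hlt | hlt
    · exact (hdiffpos k l hlt).2 (by rw [h]; simp)
    · exact (hdiffpos l k hlt).2 (by rw [← h]; simp)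
  -- some positive multiple of b₁ escapes Bs
  have hesc : ∃ K : ℤ, Lt le 0 (K • b₁) := by
    by_contra hno
    push_neg at hno
    have hsub : Set.range (fun n : ℕ => ((n : ℤ) + 1) • b₁) ⊆ Bs := by
      rintro _ ⟨n, rfl⟩
      rcases trichotomy hpo (((n : ℤ) + 1) • b₁) with h | h | h
      · exact absurd h (hno _)
      · exact absurd (hzsm ((n : ℤ) + 1) (by omega)).1 (haux _ h)
      · exact h
    have hinf : (Set.range (fun n : ℕ => ((n : ℤ) + 1) • b₁)).Infinite :=
      Set.infinite_range_of_injective (fun u v huv => by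
        have := hinj _ _ huv; omega)
    exact hinf (hBfin.subset hsub)
  obtain ⟨K, hKpos⟩ := hesc
  have hblejK : ∀ b ∈ Bs, PredLe le b (K • b₁) := by
    intro b hb
    rcases total b (K • b₁) with h | h
    · exact h
    · have hb' : Lt le 0 b := pl_pos_up hKpos h
      rcases hb with rfl | hb
      · exact absurd rfl (lt_ne hpo hb')
      · exact absurd hb'.1 hb.1
  -- cofinality of the multiples of b₁
  have hcoflist : ∀ ns : List G, (∀ n ∈ ns, Incomp le 0 n) →
      ∃ k : ℤ, PredLe le ns.sum (k • b₁) := by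
    intro ns
    induction ns with
    | nil =>
      intro _
      exact ⟨0, by rw [zero_zsmul]; exact le_pl hpo (by simpa using hpo.1 (0 : G))⟩
    | cons n ns ih =>
      intro hmem
      obtain ⟨k, hk⟩ := ih (fun m hm => hmem m (by simp [hm]))
      refine ⟨K + k, ?_⟩
      have h1 : PredLe le (n + ns.sum) (n + k • b₁) := by
        have := pl_shift hc n 0 hk
        simpa using this
      have h2 : PredLe le (n + k • b₁) (K • b₁ + k • b₁) := by
        have := pl_shift hc 0 (k • b₁) (hblejK n (Or.inr (hmem n (by simp))))
        simpa using this
      rw [List.sum_cons, add_zsmul]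
      exact pl_trans h1 h2
  have hcof : ∀ g : G, ∃ k : ℤ, PredLe le g (k • b₁) := by
    intro g
    obtain ⟨ns, hns, hsum⟩ := walk hc (hconn g)
    obtain ⟨k, hk⟩ := hcoflist ns hns
    exact ⟨k, hsum ▸ hk⟩
  have hcof' : ∀ g : G, ∃ k : ℤ, PredLe le (k • b₁) g := by
    intro g
    obtain ⟨k, hk⟩ := hcof (-g)
    refine ⟨-k, ?_⟩
    have := pl_shift hc (-(k • b₁)) g hk
    rw [neg_zsmul]
    simpa [add_assoc] using this
  -- every element is a multiple of b₁
  have hrep : ∀ g : G, ∃ k : ℤ, k • b₁ = g := by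
    intro g
    obtain ⟨mU, hmU⟩ := hcof g
    have hbdd : ∃ b : ℤ, ∀ z : ℤ, PredLe le (z • b₁) g → z ≤ b := by
      refine ⟨mU, ?_⟩
      intro z hz
      by_contra hgt
      have hlt : mU < z := by omega
      have h1 : PredLe le (z • b₁) (mU • b₁) := pl_trans hz hmU
      have hd := hdiffpos mU z hlt
      have h2 : PredLe le (-(mU • b₁) + z • b₁) 0 := by
        have := pl_shift hc (-(mU • b₁)) 0 h1
        simpa using this
      exact hd.2 (antisym h2 hd.1)
    obtain ⟨k0, hk0⟩ := hcof' g
    obtain ⟨n, hn1, hn2⟩ := Int.exists_greatest_of_bdd hbdd ⟨k0, hk0⟩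
    by_cases hr : -(n • b₁) + g = 0
    · exact ⟨n, neg_add_eq_zero.1 hr⟩
    · have hr0 : PredLe le 0 (-(n • b₁) + g) := by
        have := pl_shift hc (-(n • b₁)) 0 hn1
        simpa using this
      have hble : PredLe le b₁ (-(n • b₁) + g) := hminpos _ hr0 hr
      have hstep : PredLe le (n • b₁ + b₁) g := by
        have := pl_shift hc (n • b₁) 0 hble
        simpa [add_neg_cancel_left] using this
      have hmem : PredLe le ((n + 1) • b₁) g := by
        rw [add_zsmul, one_zsmul]
        exact hstep
      have := hn2 (n + 1) hmem
      omega
  set φ : ℤ →+ G :=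
    { toFun := fun k => k • b₁
      map_zero' := zero_zsmul b₁
      map_add' := fun m n => add_zsmul b₁ m n } with hφdef
  have hφbij : Function.Bijective φ :=
    ⟨fun u v huv => hinj u v huv, fun g => hrep g⟩
  set E := AddEquiv.ofBijective φ hφbij with hEdef
  have hEk : ∀ k : ℤ, E k = k • b₁ := fun k => rfl
  have hEx : ∀ x : G, (E.symm x) • b₁ = x := fun x => E.apply_symm_apply x
  -- the least threshold
  have hP1 : ∀ z : ℤ, Lt le 0 (z • b₁) → 1 ≤ z := by
    intro z hz
    by_contra h
    have h1 : PredLe le 0 ((-z) • b₁) := hzsm0 (-z) (by omega)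
    have h2 : PredLe le (z • b₁) 0 := by
      have := pl_shift hc (z • b₁) 0 h1
      have e : z • b₁ + (-z) • b₁ = 0 := by rw [← add_zsmul]; simp
      simpa [e] using this
    have h3 : PredLe le 0 (z • b₁) := le_pl hpo hz.1
    exact (lt_ne hpo hz) (antisym h2 h3).symm
  have hPinh : ∃ z : ℤ, Lt le 0 (z • b₁) := by
    obtain ⟨x, y, hxy⟩ := hnotantichain
    obtain ⟨k, hk⟩ := hrep (-x + y)
    exact ⟨k, by rw [hk]; exact (lt_iff_diff hc).1 hxy⟩
  obtain ⟨a, haP, haleast⟩ := Int.exists_least_of_bdd ⟨1, hP1⟩ hPinh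
  have ha1 : 1 ≤ a := hP1 a haP
  have hup : ∀ k : ℤ, a ≤ k → Lt le 0 (k • b₁) := by
    intro k hk
    rcases eq_or_lt_of_le hk with rfl | hlt
    · exact haP
    · have hd := hdiffpos a k hlt
      have hstep : PredLe le (a • b₁) (k • b₁) := by
        have := pl_shift hc (a • b₁) 0 hd.1
        simpa [add_neg_cancel_left] using this
      exact pl_pos_up haP hstep
  refine ⟨a, ha1, E.symm, ?_⟩
  intro x y
  have hdiff : -x + y = (E.symm y - E.symm x) • b₁ := by
    have h' : E.symm (-x + y) = E.symm y - E.symm x := by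
      rw [map_add, map_neg, sub_eq_neg_add]
    rw [← h', hEx]
  constructor
  · intro hxy
    rcases eq_or_ne x y with rfl | hne
    · exact Or.inl rfl
    · right
      have hlt : Lt le x y := ⟨hxy, fun hh => hne (hpo.2.2 _ _ hxy hh)⟩
      have hpos := (lt_iff_diff hc).1 hlt
      rw [hdiff] at hpos
      exact haleast _ hpos
  · rintro (rfl | h)
    · exact hpo.1 x
    · have hpos := hup _ h
      rw [← hdiff] at hpos
      exact ((lt_iff_diff hc).2 hpos).1

end Part2Main


section Part2Bwd
variable {G : Type*} [AddGroup G] {le : G → G → Prop}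

theorem part2_bwd (hpo : IsPartialOrderRel le) {a : ℤ} (ha : 1 ≤ a) (e : G ≃+ ℤ)
    (hrep : ∀ x y : G, le x y ↔ (x = y ∨ a ≤ e y - e x)) :
    {x : G | PredLe le x 0 ∧ PredLe le 0 x} = {0} ∧
      ¬ ∃ A : Set G, A.Infinite ∧ ∀ x ∈ A, ∀ y ∈ A, x ≠ y → Incomp le x y := by
  have hlt : ∀ x y : G, Lt le x y ↔ e x ≤ e y - a := by
    intro x y
    constructor
    · intro h
      rcases (hrep x y).1 h.1 with rfl | h'
      · exact absurd ((hrep x x).2 (Or.inl rfl)) h.2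
      · omega
    · intro h
      refine ⟨(hrep x y).2 (Or.inr (by omega)), ?_⟩
      intro hh
      rcases (hrep y x).1 hh with rfl | h'
      · omega
      · omega
  constructor
  · ext x
    simp only [Set.mem_setOf_eq, Set.mem_singleton_iff]
    constructor
    · rintro ⟨h1, h2⟩
      have hx1 : e x ≤ 0 := by
        have hz : Lt le (e.symm (e x - a)) x := by
          rw [hlt]
          simp
        have := h1 _ hz
        rw [hlt] at this
        simp at this
        omega
      have hx2 : 0 ≤ e x := by
        have hz : Lt le (e.symm (-a)) 0 := by
          rw [hlt]
          simp
        have := h2 _ hz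
        rw [hlt] at this
        simp at this
        omega
      have : e x = e 0 := by rw [map_zero]; omega
      exact e.injective this
    · rintro rfl
      exact ⟨fun z h => h, fun z h => h⟩
  · rintro ⟨A, hinf, hpair⟩
    obtain ⟨x0, hx0⟩ := hinf.nonempty
    have hsub : A ⊆ e ⁻¹' (Set.Icc (e x0 - a) (e x0 + a)) := by
      intro x hx
      rcases eq_or_ne x x0 with rfl | hne
      · simp only [Set.mem_preimage, Set.mem_Icc]
        omega
      · have hi := hpair x hx x0 hx0 hne
        have h1 : ¬ (x = x0 ∨ a ≤ e x0 - e x) := fun h => hi.1 ((hrep x x0).2 h)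
        have h2 : ¬ (x0 = x ∨ a ≤ e x - e x0) := fun h => hi.2 ((hrep x0 x).2 h)
        push_neg at h1 h2
        simp only [Set.mem_preimage, Set.mem_Icc]
        omega
    have hfin : (e ⁻¹' (Set.Icc (e x0 - a) (e x0 + a))).Finite :=
      (Set.finite_Icc _ _).preimage (e.injective.injOn)
    exact hinf (hfin.subset hsub)

end Part2Bwd

/-- Let `G` be an ordered group whose order is a semiorder which is not
an antichain, with `G = I(G)(0)`. Then (1) every maximal chain of `(G, ≤)` is
order-isomorphic to `ℤ`; (2) `K(G) = {0}` and `G` has no infinite antichain iff `G` is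
isomorphic as an ordered group to `ℤ` with the order `x ≤ y` iff `x = y` or `y - x ≥ a`,
for some integer `a ≥ 1`. -/
theorem connected_semiordered_group_chains {G : Type*} [AddGroup G] (le : G → G → Prop)
    (hpo : IsPartialOrderRel le) (hc : IsCompat le)
    (hsemi : ¬ Embeds2p2 le ∧ ¬ Embeds3p1 le)
    (hnotantichain : ∃ x y : G, Lt le x y)
    (hconn : ∀ x : G, Relation.ReflTransGen (fun a b => Incomp le a b) 0 x) :
    -- (1) every maximal chain of `(G, ≤)` is order-isomorphic to the chain `ℤ`
    (∀ C : Set G,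
      (∀ x ∈ C, ∀ y ∈ C, le x y ∨ le y x) →
      (∀ D : Set G, C ⊆ D → (∀ x ∈ D, ∀ y ∈ D, le x y ∨ le y x) → D = C) →
      ∃ f : ℤ → G, (∀ m n : ℤ, m ≤ n ↔ le (f m) (f n)) ∧ Set.range f = C) ∧
    -- (2) `K(G) = {0}` and no infinite antichain iff `G` is the ordered group `ℤ`
    -- with a threshold order
    (({x : G | PredLe le x 0 ∧ PredLe le 0 x} = {0} ∧
        ¬ ∃ A : Set G, A.Infinite ∧ ∀ x ∈ A, ∀ y ∈ A, x ≠ y → Incomp le x y) ↔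
      ∃ a : ℤ, 1 ≤ a ∧ ∃ e : G ≃+ ℤ, ∀ x y : G, le x y ↔ (x = y ∨ a ≤ e y - e x)) := by
  obtain ⟨h22, h31⟩ := hsemi
  constructor
  · intro C hCtot hmax
    exact part1 hpo hc h31 hnotantichain hconn C hCtot hmax
  · constructor
    · rintro ⟨hK, hA⟩
      exact part2_fwd hpo hc h22 hnotantichain hconn hK hA
    · rintro ⟨a, ha, e, hrep⟩
      exact part2_bwd hpo ha e hrep

end ThrPaper
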